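/- Proposition 4.3 (Efficiency of (OP₁), closed form of the PBAcc quadratic form): Let n ≥ 1, let y : Fin n → ℝ take values in {0,1}, let c : Fin n → ℝ, set ỹ = y ⊙ c, suppose S⁻ := Σ_i (1 − y_i) > 0, set c⁺ = Σ_i ỹ_i, let A = (1/S⁻)·( ỹ·(𝟙−y)ᵀ + (𝟙−y)·ỹᵀ ), and P = diag(A·𝟙) − A. Then for every f : Fin n → ℝ, writing Q = f − y, the quadratic form evaluates to Qᵀ P Q = Σ_i ( ỹ_i + (c⁺/S⁻)·(1 − y_i) )·Q_i² − (2/S⁻) · ( Σ_i ỹ_i·Q_i ) · ( Σ_j (1 − y_j)·Q_j ); i.e., it equals a diagonally weighted sum of squares minus twice the product of two inner products, each computable from Q with Θ(n) operations. -/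

import Mathlib

/-- Proposition 4.3 (Efficiency of (OP₁)): the PBAcc quadratic form `Qᵀ P Q` evaluates to a
diagonally weighted sum of squares minus twice the product of two inner products, each
computable from `Q` in `Θ(n)` operations. -/
theorem pbacc_quadratic_form_closed_form (n : ℕ) (hn : 1 ≤ n)
    (y c : Fin n → ℝ) (hy : ∀ i, y i = 0 ∨ y i = 1)
    (Sneg : ℝ) (hSneg : Sneg = ∑ i, (1 - y i)) (hSpos : 0 < Sneg)
    (ytil : Fin n → ℝ) (hytil : ytil = fun i => y i * c i)
    (cplus : ℝ) (hcplus : cplus = ∑ i, ytil i)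
    (A : Matrix (Fin n) (Fin n) ℝ)
    (hA : A = (1 / Sneg) • (Matrix.vecMulVec ytil (fun j => 1 - y j)
      + Matrix.vecMulVec (fun i => 1 - y i) ytil))
    (P : Matrix (Fin n) (Fin n) ℝ)
    (hP : P = Matrix.diagonal (Matrix.mulVec A (fun _ => 1)) - A)
    (f : Fin n → ℝ) (Q : Fin n → ℝ) (hQ : Q = fun i => f i - y i) :
    dotProduct Q (Matrix.mulVec P Q) =
      (∑ i, (ytil i + (cplus / Sneg) * (1 - y i)) * (Q i) ^ 2)
        - (2 / Sneg) * (∑ i, ytil i * Q i) * (∑ j, (1 - y j) * Q j) := by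
  have hS0 : Sneg ≠ 0 := ne_of_gt hSpos
  have key : ∀ (u v w : Fin n → ℝ),
      dotProduct w (Matrix.mulVec (Matrix.vecMulVec u v) w)
        = (∑ i, u i * w i) * (∑ j, v j * w j) := by
    intro u v w
    simp only [dotProduct, Matrix.mulVec, Matrix.vecMulVec_apply]
    rw [Finset.sum_mul_sum]
    refine Finset.sum_congr rfl fun i _ => ?_
    rw [Finset.mul_sum]
    exact Finset.sum_congr rfl fun j _ => by ring
  have hd : Matrix.mulVec A (fun _ => 1) = fun i => ytil i + (cplus / Sneg) * (1 - y i) := by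
    funext i
    simp only [hA, Matrix.mulVec, dotProduct, Matrix.smul_apply, Matrix.add_apply,
      Matrix.vecMulVec_apply, smul_eq_mul, mul_one]
    rw [← Finset.mul_sum, Finset.sum_add_distrib, ← Finset.mul_sum, ← Finset.mul_sum,
      ← hSneg, ← hcplus]
    field_simp
  have hAQ : dotProduct Q (Matrix.mulVec A Q)
      = (2 / Sneg) * (∑ i, ytil i * Q i) * (∑ j, (1 - y j) * Q j) := by
    rw [hA, Matrix.smul_mulVec, dotProduct_smul, Matrix.add_mulVec,
      dotProduct_add, key, key]
    field_simp
    ring_nf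
    field_simp
  rw [hP, Matrix.sub_mulVec, dotProduct_sub, hAQ, hd]
  congr 1
  simp only [dotProduct, Matrix.mulVec_diagonal]
  exact Finset.sum_congr rfl fun i _ => by ring
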